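/- Let g = x + x²y + z² + t³ ∈ ℂ[x,y,z,t] (the Koras–Russell threefold polynomial). Then g is a factorially closed polynomial, i.e., for all nonzero p, q ∈ ℂ[x,y,z,t], pq ∈ ℂ[g] implies p ∈ ℂ[g] and q ∈ ℂ[g]. -/

import Mathlib

open MvPolynomial

noncomputable section KRaux

/-- Units in `MvPolynomial (Fin n) ℂ` are constants. -/
private lemma KR.isUnit_eq_C (n : ℕ) :
    ∀ p : MvPolynomial (Fin n) ℂ, IsUnit p → ∃ c : ℂ, p = C c := by
  induction n with
  | zero => exact fun p _ => ⟨p.coeff 0, eq_C_of_isEmpty p⟩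
  | succ n ih =>
    intro p hp
    have h2 : IsUnit (finSuccEquiv ℂ n p) := hp.map (finSuccEquiv ℂ n).toAlgHom
    rw [Polynomial.isUnit_iff] at h2
    obtain ⟨r, hr, hrp⟩ := h2
    obtain ⟨c, rfl⟩ := ih r hr
    refine ⟨c, (finSuccEquiv ℂ n).injective ?_⟩
    rw [← hrp]
    simp [finSuccEquiv_apply]

private lemma KR.prime_X0 : Prime (X 0 : MvPolynomial (Fin 3) ℂ) := by
  rw [← MulEquiv.prime_iff (finSuccEquiv ℂ 2).toMulEquiv]
  have : (finSuccEquiv ℂ 2).toMulEquiv (X 0) = Polynomial.X := finSuccEquiv_X_zero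
  rw [this]
  exact Polynomial.prime_X

private lemma KR.not_dvd (a : ℂ) :
    ¬ (X 0 : MvPolynomial (Fin 3) ℂ) ∣ (X 0 + X 1 ^ 2 + X 2 ^ 3 - C a) := by
  intro h
  have h2 : (X 0 : MvPolynomial (Fin 3) ℂ) ∣ (X 1 ^ 2 + X 2 ^ 3 - C a) := by
    have e : (X 1 ^ 2 + X 2 ^ 3 - C a : MvPolynomial (Fin 3) ℂ)
        = (X 0 + X 1 ^ 2 + X 2 ^ 3 - C a) - X 0 := by ring
    rw [e]; exact dvd_sub h dvd_rfl
  obtain ⟨k, hk⟩ := h2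
  have hev : ∀ c : ℂ, c ^ 3 - a = 0 := by
    intro c
    have := congrArg (eval (![0, 0, c] : Fin 3 → ℂ)) hk
    simpa using this
  have h0 := hev 0
  have h1 := hev 1
  simp at h0 h1
  rw [h0] at h1
  simp at h1

/-- A linear polynomial over a UFD with coprime coefficients is prime. -/
private lemma KR.prime_linear {R : Type*} [CommRing R] [IsDomain R]
    [UniqueFactorizationMonoid R] (A B : R) (hA : A ≠ 0)
    (hcop : ∀ r : R, r ∣ A → r ∣ B → IsUnit r) :
    Prime (Polynomial.C A * Polynomial.X + Polynomial.C B) := by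
  rw [← UniqueFactorizationMonoid.irreducible_iff_prime]
  set f : Polynomial R := Polynomial.C A * Polynomial.X + Polynomial.C B with hf
  have hc1 : f.coeff 1 = A := by simp [hf]
  have hc0 : f.coeff 0 = B := by simp [hf]
  have hdeg : f.natDegree = 1 := Polynomial.natDegree_linear hA
  have hf0 : f ≠ 0 := by
    intro h; rw [h] at hdeg; simp at hdeg
  constructor
  · intro hu
    have := Polynomial.natDegree_eq_zero_of_isUnit hu
    omega
  · intro u v huv
    have hu0 : u ≠ 0 := by rintro rfl; simp at huv; exact hf0 huv
    have hv0 : v ≠ 0 := by rintro rfl; simp at huv; exact hf0 huv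
    have hsum : u.natDegree + v.natDegree = 1 := by
      rw [← Polynomial.natDegree_mul hu0 hv0, ← huv, hdeg]
    rcases Nat.eq_zero_or_pos u.natDegree with hud | hud
    · left
      obtain ⟨r, hr⟩ := Polynomial.natDegree_eq_zero.mp hud
      have hrA : r ∣ A := by
        refine ⟨v.coeff 1, ?_⟩
        rw [← hc1, huv, ← hr, Polynomial.coeff_C_mul]
      have hrB : r ∣ B := by
        refine ⟨v.coeff 0, ?_⟩
        rw [← hc0, huv, ← hr, Polynomial.coeff_C_mul]
      rw [← hr]
      exact (Polynomial.isUnit_C).mpr (hcop r hrA hrB)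
    · right
      have hvd : v.natDegree = 0 := by omega
      obtain ⟨r, hr⟩ := Polynomial.natDegree_eq_zero.mp hvd
      have hrA : r ∣ A := by
        refine ⟨u.coeff 1, ?_⟩
        rw [← hc1, huv, ← hr, mul_comm, Polynomial.coeff_C_mul]
      have hrB : r ∣ B := by
        refine ⟨u.coeff 0, ?_⟩
        rw [← hc0, huv, ← hr, mul_comm, Polynomial.coeff_C_mul]
      rw [← hr]
      exact (Polynomial.isUnit_C).mpr (hcop r hrA hrB)

private lemma KR.coprime (a : ℂ) (r : MvPolynomial (Fin 3) ℂ)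
    (hrA : r ∣ X 0 ^ 2) (hrB : r ∣ X 0 + X 1 ^ 2 + X 2 ^ 3 - C a) : IsUnit r := by
  by_contra hr
  have hr0 : r ≠ 0 := by
    rintro rfl
    rw [zero_dvd_iff] at hrA
    exact pow_ne_zero 2 (X_ne_zero 0) hrA
  obtain ⟨π, hπ, hπr⟩ := WfDvdMonoid.exists_irreducible_factor hr hr0
  have hπp : Prime π := UniqueFactorizationMonoid.irreducible_iff_prime.mp hπ
  have hd : π ∣ X 0 := hπp.dvd_of_dvd_pow (hπr.trans hrA)
  have hassoc : Associated π (X 0) := hπ.associated_of_dvd KR.prime_X0.irreducible hd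
  exact KR.not_dvd a ((hassoc.symm.dvd.trans hπr).trans hrB)

private lemma KR.prime_shift (a : ℂ) :
    Prime ((X 0 + X 0 ^ 2 * X 1 + X 2 ^ 2 + X 3 ^ 3 : MvPolynomial (Fin 4) ℂ) - C a) := by
  set e : MvPolynomial (Fin 4) ℂ ≃ₐ[ℂ] Polynomial (MvPolynomial (Fin 3) ℂ) :=
    (renameEquiv ℂ (Equiv.swap (0 : Fin 4) 1)).trans (finSuccEquiv ℂ 3) with he
  rw [← MulEquiv.prime_iff e.toMulEquiv]
  have E0 : e (X 0) = Polynomial.C (X 0) := by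
    rw [he]
    simp only [AlgEquiv.trans_apply, renameEquiv_apply, rename_X, Equiv.swap_apply_left]
    rw [show (1 : Fin 4) = Fin.succ 0 from rfl, finSuccEquiv_X_succ]
  have E1 : e (X 1) = Polynomial.X := by
    rw [he]
    simp only [AlgEquiv.trans_apply, renameEquiv_apply, rename_X, Equiv.swap_apply_right]
    exact finSuccEquiv_X_zero
  have E2 : e (X 2) = Polynomial.C (X 1) := by
    rw [he]
    simp only [AlgEquiv.trans_apply, renameEquiv_apply, rename_X]
    rw [Equiv.swap_apply_of_ne_of_ne (by decide) (by decide)]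
    rw [show (2 : Fin 4) = Fin.succ 1 from rfl, finSuccEquiv_X_succ]
  have E3 : e (X 3) = Polynomial.C (X 2) := by
    rw [he]
    simp only [AlgEquiv.trans_apply, renameEquiv_apply, rename_X]
    rw [Equiv.swap_apply_of_ne_of_ne (by decide) (by decide)]
    rw [show (3 : Fin 4) = Fin.succ 2 from rfl, finSuccEquiv_X_succ]
  have EC : e (C a) = Polynomial.C (C a) := by
    rw [he]
    simp [algebraMap_eq, finSuccEquiv_apply]
  have Eg : e.toMulEquiv ((X 0 + X 0 ^ 2 * X 1 + X 2 ^ 2 + X 3 ^ 3 : MvPolynomial (Fin 4) ℂ) - C a)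
      = Polynomial.C (X 0 ^ 2 : MvPolynomial (Fin 3) ℂ) * Polynomial.X
        + Polynomial.C (X 0 + X 1 ^ 2 + X 2 ^ 3 - C a) := by
    show e _ = _
    simp only [map_sub, map_add, map_mul, map_pow, E0, E1, E2, E3, EC]
    ring
  rw [Eg]
  exact KR.prime_linear _ _ (pow_ne_zero 2 (X_ne_zero 0)) (KR.coprime a)

private lemma KR.mem_adjoin_aux :
    (X 0 + X 0 ^ 2 * X 1 + X 2 ^ 2 + X 3 ^ 3 : MvPolynomial (Fin 4) ℂ) ∈
      Algebra.adjoin ℂ {(X 0 + X 0 ^ 2 * X 1 + X 2 ^ 2 + X 3 ^ 3 : MvPolynomial (Fin 4) ℂ)} :=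
  Algebra.subset_adjoin rfl

private lemma KR.C_mem (c : ℂ) :
    (C c : MvPolynomial (Fin 4) ℂ) ∈
      Algebra.adjoin ℂ {(X 0 + X 0 ^ 2 * X 1 + X 2 ^ 2 + X 3 ^ 3 : MvPolynomial (Fin 4) ℂ)} := by
  rw [← algebraMap_eq]
  exact Subalgebra.algebraMap_mem _ c

private lemma KR.key (s : Multiset ℂ) :
    ∀ p q : MvPolynomial (Fin 4) ℂ, p ≠ 0 → q ≠ 0 → ∀ c : ℂ,
      p * q = C c * (s.map
        (fun l => (X 0 + X 0 ^ 2 * X 1 + X 2 ^ 2 + X 3 ^ 3 : MvPolynomial (Fin 4) ℂ) - C l)).prod →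
      p ∈ Algebra.adjoin ℂ
          {(X 0 + X 0 ^ 2 * X 1 + X 2 ^ 2 + X 3 ^ 3 : MvPolynomial (Fin 4) ℂ)} ∧
      q ∈ Algebra.adjoin ℂ
          {(X 0 + X 0 ^ 2 * X 1 + X 2 ^ 2 + X 3 ^ 3 : MvPolynomial (Fin 4) ℂ)} := by
  induction s using Multiset.induction_on with
  | empty =>
    intro p q hp hq c hpq
    rw [Multiset.map_zero, Multiset.prod_zero, mul_one] at hpq
    have hc : c ≠ 0 := by
      rintro rfl
      rw [map_zero] at hpq
      exact mul_ne_zero hp hq hpq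
    have hCc : IsUnit (C c : MvPolynomial (Fin 4) ℂ) := by
      refine isUnit_iff_exists_inv.mpr ⟨C c⁻¹, ?_⟩
      rw [← map_mul, mul_inv_cancel₀ hc, map_one]
    rw [← hpq] at hCc
    have hup : IsUnit p := isUnit_of_mul_isUnit_left hCc
    have huq : IsUnit q := isUnit_of_mul_isUnit_right hCc
    obtain ⟨cp, rfl⟩ := KR.isUnit_eq_C 4 p hup
    obtain ⟨cq, rfl⟩ := KR.isUnit_eq_C 4 q huq
    exact ⟨KR.C_mem cp, KR.C_mem cq⟩
  | cons a s ih =>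
    intro p q hp hq c hpq
    have hprime := KR.prime_shift a
    rw [Multiset.map_cons, Multiset.prod_cons] at hpq
    set G : MvPolynomial (Fin 4) ℂ := X 0 + X 0 ^ 2 * X 1 + X 2 ^ 2 + X 3 ^ 3 with hG
    have hdvd : (G - C a) ∣ p * q :=
      ⟨C c * (s.map (fun l => G - C l)).prod, by rw [hpq]; ring⟩
    have hGa : (G - C a) ∈ Algebra.adjoin ℂ ({G} : Set (MvPolynomial (Fin 4) ℂ)) :=
      sub_mem KR.mem_adjoin_aux (KR.C_mem a)
    rcases hprime.2.2 _ _ hdvd with h | h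
    · obtain ⟨p', rfl⟩ := h
      have hp' : p' ≠ 0 := by rintro rfl; rw [mul_zero] at hp; exact hp rfl
      have hcancel : p' * q = C c * (s.map (fun l => G - C l)).prod := by
        apply mul_left_cancel₀ hprime.ne_zero
        calc (G - C a) * (p' * q) = (G - C a) * p' * q := by ring
          _ = C c * ((G - C a) * (s.map (fun l => G - C l)).prod) := hpq
          _ = (G - C a) * (C c * (s.map (fun l => G - C l)).prod) := by ring
      obtain ⟨hpmem, hqmem⟩ := ih p' q hp' hq c hcancel
      exact ⟨mul_mem hGa hpmem, hqmem⟩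
    · obtain ⟨q', rfl⟩ := h
      have hq' : q' ≠ 0 := by rintro rfl; rw [mul_zero] at hq; exact hq rfl
      have hcancel : p * q' = C c * (s.map (fun l => G - C l)).prod := by
        apply mul_left_cancel₀ hprime.ne_zero
        calc (G - C a) * (p * q') = p * ((G - C a) * q') := by ring
          _ = C c * ((G - C a) * (s.map (fun l => G - C l)).prod) := hpq
          _ = (G - C a) * (C c * (s.map (fun l => G - C l)).prod) := by ring
      obtain ⟨hpmem, hqmem⟩ := ih p q' hp hq' c hcancel
      exact ⟨hpmem, mul_mem hGa hqmem⟩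

end KRaux

/-- **Example 2.7 (b).** The Koras–Russell threefold polynomial
`g = x + x²y + z² + t³ ∈ ℂ[x,y,z,t]` is factorially closed: if `p q ∈ ℂ[g]` for nonzero
`p, q ∈ ℂ[x,y,z,t]`, then `p ∈ ℂ[g]` and `q ∈ ℂ[g]`.  Here `x = X 0`, `y = X 1`, `z = X 2`,
`t = X 3`. -/
theorem korasRussell_factoriallyClosed :
    ∀ p q : MvPolynomial (Fin 4) ℂ, p ≠ 0 → q ≠ 0 →
      p * q ∈ Algebra.adjoin ℂ
          {(X 0 + X 0 ^ 2 * X 1 + X 2 ^ 2 + X 3 ^ 3 : MvPolynomial (Fin 4) ℂ)} →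
        p ∈ Algebra.adjoin ℂ
            {(X 0 + X 0 ^ 2 * X 1 + X 2 ^ 2 + X 3 ^ 3 : MvPolynomial (Fin 4) ℂ)} ∧
        q ∈ Algebra.adjoin ℂ
            {(X 0 + X 0 ^ 2 * X 1 + X 2 ^ 2 + X 3 ^ 3 : MvPolynomial (Fin 4) ℂ)} := by
  intro p q hp hq hmem
  set G : MvPolynomial (Fin 4) ℂ := X 0 + X 0 ^ 2 * X 1 + X 2 ^ 2 + X 3 ^ 3 with hG
  rw [Algebra.adjoin_singleton_eq_range_aeval, AlgHom.mem_range] at hmem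
  obtain ⟨F, hF⟩ := hmem
  have hF0 : F ≠ 0 := by
    rintro rfl
    rw [map_zero] at hF
    exact mul_ne_zero hp hq hF.symm
  have hroots : F.roots.card = F.natDegree :=
    (Polynomial.splits_iff_card_roots).mp (IsAlgClosed.splits F)
  have hfact := Polynomial.C_leadingCoeff_mul_prod_multiset_X_sub_C hroots
  have hPQ : p * q = C F.leadingCoeff * (F.roots.map (fun l => G - C l)).prod := by
    conv_lhs => rw [← hF]
    conv_lhs => rw [← hfact]
    rw [map_mul, Polynomial.aeval_C, map_multiset_prod, Multiset.map_map, algebraMap_eq]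
    congr 1
    congr 1
    apply Multiset.map_congr rfl
    intro l _
    simp [algebraMap_eq]
  exact KR.key F.roots p q hp hq F.leadingCoeff hPQ
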